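/- arXiv:1306.0957 — 2 statements merged into one kernel-verified Lean document; each statement's English description precedes it below -/
import Mathlib

section
/- Suppose θ = id and let f ∈ F_q[X] be monic of degree n with f(0) ≠ 0 and companion matrix A_c. Let f⃗ = (f_0, ..., f_{n-1}) be the vector of coefficients of f (so the last row of A_c is f⃗), and let k be the minimal nonnegative integer h such that f⃗·A_c^h = e_1, the first standard basis vector. Then the order m of A_c (equivalently, the minimal m with f dividing X^m − 1) satisfies m = n + k. -/
open Polynomial Matrix

/-- The companion matrix of a monic polynomial `f = Xⁿ − f_{n-1}X^{n-1} − ... − f_0`: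
it has `1`'s on the superdiagonal and last row `(f_0, ..., f_{n-1})`, where
`f_j = -(f.coeff j)`. -/
def companionMatrix {F : Type*} [Field F] (n : ℕ) (f : Polynomial F) :
    Matrix (Fin n) (Fin n) F :=
  fun i j => if (i : ℕ) + 1 = n then -(f.coeff j)
    else if (i : ℕ) + 1 = (j : ℕ) then 1 else 0

/-- For `θ = id`, `f` monic of degree `n` with `f(0) ≠ 0`, `f⃗` the vector
`(f_0,...,f_{n-1})` of coefficients (the last row of the companion matrix `A_c`), and
`k` the minimal nonnegative integer `h` with `f⃗·A_c^h = e₁`, the order `m` of `A_c`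
satisfies `m = n + k`. -/
theorem orderOf_companion_eq_add {F : Type*} [Field F] [Fintype F]
    (n : ℕ) (hn : 0 < n) (f : Polynomial F) (hmonic : f.Monic)
    (hdeg : f.natDegree = n) (hf0 : f.coeff 0 ≠ 0) (k : ℕ)
    (hk : IsLeast {h : ℕ |
        Matrix.vecMul (fun j : Fin n => -(f.coeff j)) ((companionMatrix n f) ^ h) =
          Pi.single (⟨0, hn⟩ : Fin n) 1} k) :
    orderOf (companionMatrix n f) = n + k := by
  obtain ⟨hk1, hk2⟩ := hk
  set A := companionMatrix n f with hA
  -- row extraction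
  have hrow : ∀ (M : Matrix (Fin n) (Fin n) F) (i : Fin n),
      Matrix.vecMul (Pi.single i (1 : F)) M = M i := by
    intro M i
    simp [Matrix.single_vecMul]; rfl
  -- e₁ · A^h = e_{h+1} for h < n
  have e1pow : ∀ h : ℕ, (hh : h < n) →
      Matrix.vecMul (Pi.single (⟨0, hn⟩ : Fin n) 1) (A ^ h) =
        Pi.single (⟨h, hh⟩ : Fin n) 1 := by
    intro h
    induction h with
    | zero => intro hh; simp
    | succ h ih =>
      intro hh
      have hh' : h < n := Nat.lt_of_succ_lt hh
      rw [pow_succ, ← Matrix.vecMul_vecMul, ih hh', hrow]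
      funext j
      simp only [hA, companionMatrix, Fin.val_mk]
      rw [if_neg (show ¬(h + 1 = n) by omega)]
      simp [Pi.single_apply, Fin.ext_iff, eq_comm]
  -- e₁ · A^n = f⃗
  have e1n : Matrix.vecMul (Pi.single (⟨0, hn⟩ : Fin n) 1) (A ^ n) =
      (fun j : Fin n => -(f.coeff j)) := by
    have hn1 : n - 1 < n := by omega
    have hpow : A ^ n = A ^ (n - 1) * A := by
      rw [← pow_succ]; congr 1; omega
    rw [hpow, ← Matrix.vecMul_vecMul, e1pow (n-1) hn1, hrow]
    funext j
    simp only [hA, companionMatrix, Fin.val_mk]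
    rw [if_pos (by omega)]
  -- f⃗ · A^h = e₁ · A^(n+h)
  have key : ∀ h : ℕ,
      Matrix.vecMul (fun j : Fin n => -(f.coeff j)) (A ^ h) =
        Matrix.vecMul (Pi.single (⟨0, hn⟩ : Fin n) 1) (A ^ (n + h)) := by
    intro h
    rw [pow_add, ← Matrix.vecMul_vecMul, e1n]
  -- e₁ · A^(n+k) = e₁
  have e1fix : Matrix.vecMul (Pi.single (⟨0, hn⟩ : Fin n) 1) (A ^ (n + k)) =
      Pi.single (⟨0, hn⟩ : Fin n) 1 := by
    rw [← key k]; exact hk1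
  -- A^(n+k) = 1
  have hone : A ^ (n + k) = 1 := by
    ext i j
    have hi : (⟨(i : ℕ), i.isLt⟩ : Fin n) = i := rfl
    have : Matrix.vecMul (Pi.single i (1 : F)) (A ^ (n + k)) = Pi.single i 1 := by
      rw [← hi, ← e1pow (i : ℕ) i.isLt, Matrix.vecMul_vecMul, ← pow_add,
        Nat.add_comm, pow_add, ← Matrix.vecMul_vecMul, e1fix, e1pow (i : ℕ) i.isLt]
    have h2 := congrFun this j
    rw [hrow] at h2
    rw [h2]
    simp [Matrix.one_apply, Pi.single_apply, eq_comm]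
  rw [orderOf_eq_iff (by omega)]
  refine ⟨hone, ?_⟩
  intro t ht htpos habs
  rcases lt_or_ge t n with h1 | h1
  · have := e1pow t h1
    rw [habs, Matrix.vecMul_one] at this
    have := congrFun this ⟨t, h1⟩
    simp [Pi.single_apply, Fin.ext_iff] at this
    omega
  · obtain ⟨h, rfl⟩ := Nat.exists_eq_add_of_le h1
    have hh : h < k := by omega
    have : Matrix.vecMul (fun j : Fin n => -(f.coeff j)) (A ^ h) =
        Pi.single (⟨0, hn⟩ : Fin n) 1 := by
      rw [key h, habs, Matrix.vecMul_one]
    exact absurd (hk2 this) (by omega)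
end

section
/- Let R = F_q[X;θ] be the skew polynomial ring and let f ∈ R with f·q_f = X^m − 1 for some q_f ∈ R, where f, q_f are monic. Define the ring automorphism Θ of R by (Σ a_i X^i)Θ := Σ θ(a_i) X^i. Then f = (f)Θ^m, i.e., all coefficients of f are fixed by θ^m. Consequently, writing f = (−1)^n(X^n − Σ f_i X^i), if the coefficient vector (f_0,...,f_{n-1}) is not fixed by θ^t for any 0 < t < s (s the order of θ), then s divides m. -/
open Polynomial

/-- The `k`-th coefficient of the skew product `f * g` in the skew polynomial ring
`F[X;θ]`, where multiplication satisfies `X · a = θ(a) · X`, so that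
`(f*g)_k = ∑_{i+j=k} f_i θ^i(g_j)`. -/
noncomputable def skewMulCoeff {F : Type*} [Field F] (θ : RingAut F)
    (f g : Polynomial F) (k : ℕ) : F :=
  ∑ i ∈ Finset.range (k + 1), f.coeff i * (θ ^ i) (g.coeff (k - i))

open Finset in
/-- Associativity of skew multiplication, at the level of coefficients. -/
lemma skew_assoc {F : Type*} [Field F] (θ : RingAut F) (f g h : Polynomial F) (k : ℕ) :
    ∑ i ∈ range (k+1), f.coeff i * (θ^i) (skewMulCoeff θ g h (k-i)) =
    ∑ p ∈ range (k+1), skewMulCoeff θ f g p * (θ^p) (h.coeff (k-p)) := by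
  have L : ∑ i ∈ range (k+1), f.coeff i * (θ^i) (skewMulCoeff θ g h (k-i)) =
      ∑ x ∈ (range (k+1)).sigma (fun i => range (k - i + 1)),
        f.coeff x.1 * (θ^x.1) (g.coeff x.2) * (θ^(x.1+x.2)) (h.coeff (k - x.1 - x.2)) := by
    rw [Finset.sum_sigma]
    refine Finset.sum_congr rfl (fun i hi => ?_)
    rw [skewMulCoeff, map_sum, Finset.mul_sum]
    refine Finset.sum_congr rfl (fun j hj => ?_)
    rw [map_mul, pow_add, mul_assoc]
    rfl
  have R : ∑ p ∈ range (k+1), skewMulCoeff θ f g p * (θ^p) (h.coeff (k-p)) =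
      ∑ y ∈ (range (k+1)).sigma (fun p => range (p + 1)),
        f.coeff y.2 * (θ^y.2) (g.coeff (y.1 - y.2)) * (θ^y.1) (h.coeff (k - y.1)) := by
    rw [Finset.sum_sigma]
    refine Finset.sum_congr rfl (fun p hp => ?_)
    rw [skewMulCoeff, Finset.sum_mul]
  rw [L, R]
  refine Finset.sum_nbij' (fun x => ⟨x.1 + x.2, x.1⟩) (fun y => ⟨y.2, y.1 - y.2⟩)
    ?_ ?_ ?_ ?_ ?_
  · rintro ⟨i, j⟩ hx
    simp only [Finset.mem_sigma, Finset.mem_range] at *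
    omega
  · rintro ⟨p, i⟩ hy
    simp only [Finset.mem_sigma, Finset.mem_range] at *
    omega
  · rintro ⟨i, j⟩ hx
    simp only [Finset.mem_sigma, Finset.mem_range] at hx
    simp only [Sigma.mk.inj_iff, heq_eq_eq]
    exact ⟨trivial, by omega⟩
  · rintro ⟨p, i⟩ hy
    simp only [Finset.mem_sigma, Finset.mem_range] at hy
    simp only [Sigma.mk.inj_iff, heq_eq_eq]
    exact ⟨by omega, trivial⟩
  · rintro ⟨i, j⟩ hx
    simp only [Finset.mem_sigma, Finset.mem_range] at hx
    simp only
    rw [Nat.add_sub_cancel_left, Nat.sub_sub]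

open Finset in
lemma skew_top {F : Type*} [Field F] (θ : RingAut F) {f g : Polynomial F}
    (hf : f.Monic) (hg : g.Monic) :
    skewMulCoeff θ f g (f.natDegree + g.natDegree) = 1 := by
  rw [skewMulCoeff, Finset.sum_eq_single f.natDegree]
  · rw [Nat.add_sub_cancel_left, hf.coeff_natDegree, hg.coeff_natDegree, map_one, one_mul]
  · intro i hi hne
    simp only [Finset.mem_range, Nat.lt_succ_iff] at hi
    rcases lt_or_gt_of_ne hne with h | h
    · rw [coeff_eq_zero_of_natDegree_lt (p := g) (by omega), map_zero, mul_zero]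
    · rw [coeff_eq_zero_of_natDegree_lt (p := f) h, zero_mul]
  · intro h
    exact absurd (Finset.mem_range.mpr (by omega)) h

open Finset in
lemma skew_vanish {F : Type*} [Field F] (θ : RingAut F) (f g : Polynomial F)
    {k : ℕ} (hk : f.natDegree + g.natDegree < k) :
    skewMulCoeff θ f g k = 0 := by
  rw [skewMulCoeff]
  apply Finset.sum_eq_zero
  intro i hi
  simp only [Finset.mem_range, Nat.lt_succ_iff] at hi
  by_cases h : i ≤ f.natDegree
  · rw [coeff_eq_zero_of_natDegree_lt (p := g) (by omega), map_zero, mul_zero]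
  · rw [coeff_eq_zero_of_natDegree_lt (p := f) (by omega), zero_mul]

lemma spike1 {F : Type*} [Field F] (x : ℕ → F) (j k : ℕ) :
    ∑ p ∈ Finset.range (k+1), (if p = j then (1:F) else 0) * x p
      = if j ≤ k then x j else 0 := by
  simp only [ite_mul, one_mul, zero_mul]
  rw [Finset.sum_ite_eq' (Finset.range (k+1)) j x]
  simp [Nat.lt_succ_iff]

lemma spike2 {F : Type*} [Field F] (x : ℕ → F) (j k : ℕ) :
    ∑ i ∈ Finset.range (k+1), x i * (if k - i = j then (1:F) else 0)
      = if j ≤ k then x (k - j) else 0 := by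
  by_cases h : j ≤ k
  · rw [if_pos h]
    have hc : ∀ i ∈ Finset.range (k+1),
        x i * (if k - i = j then (1:F) else 0) = if i = k - j then x i else 0 := by
      intro i hi
      simp only [Finset.mem_range, Nat.lt_succ_iff] at hi
      by_cases hij : i = k - j
      · rw [if_pos (by omega), if_pos hij, mul_one]
      · rw [if_neg (by omega), if_neg hij, mul_zero]
    rw [Finset.sum_congr rfl hc, Finset.sum_ite_eq' (Finset.range (k+1)) (k-j) x,
      if_pos (Finset.mem_range.mpr (by omega))]
  · rw [if_neg h, Finset.sum_eq_zero]
    intro i hi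
    simp only [Finset.mem_range, Nat.lt_succ_iff] at hi
    rw [if_neg (by omega), mul_zero]

lemma hc_lemma {F : Type*} [Field F] (m p : ℕ) : (X ^ m - 1 : Polynomial F).coeff p
    = (if p = m then (1:F) else 0) - (if p = 0 then 1 else 0) := by
  simp [coeff_sub, coeff_X_pow, coeff_one]

lemma skew_deg_eq {F : Type*} [Field F] (θ : RingAut F) {f qf : Polynomial F}
    (hf : f.Monic) (hqf : qf.Monic) (m : ℕ)
    (hmul : ∀ k : ℕ, skewMulCoeff θ f qf k = (X ^ m - 1 : Polynomial F).coeff k)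
    (htop : skewMulCoeff θ f qf (f.natDegree + qf.natDegree) = 1) :
    m = f.natDegree + qf.natDegree ∧ 1 ≤ m := by
  have h1 : (1:F) = (X ^ m - 1 : Polynomial F).coeff (f.natDegree + qf.natDegree) := by
    rw [← hmul, htop]
  rw [hc_lemma] at h1
  by_cases hnd : f.natDegree + qf.natDegree = m
  · refine ⟨hnd.symm, ?_⟩
    by_contra hm
    have hm0 : m = 0 := by omega
    rw [if_pos hnd, if_pos (by omega)] at h1
    simp at h1
  · exfalso
    rw [if_neg hnd] at h1
    by_cases h0 : f.natDegree + qf.natDegree = 0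
    · have hm0 : m ≠ 0 := by omega
      have hfn : f = 1 := hf.natDegree_eq_zero.mp (by omega)
      have hqn : qf = 1 := hqf.natDegree_eq_zero.mp (by omega)
      have h2 := hmul m
      rw [hfn, hqn, hc_lemma] at h2
      rw [skewMulCoeff, Finset.sum_eq_single 0] at h2
      · simp [coeff_one, hm0] at h2
      · intro i hi hne
        simp [coeff_one, hne]
      · intro h; exact absurd (Finset.mem_range.mpr (by omega)) h
    · rw [if_neg h0] at h1
      simp at h1

lemma skew_const_ne {F : Type*} [Field F] (θ : RingAut F) {f qf : Polynomial F}
    (m : ℕ) (hm : 1 ≤ m)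
    (hmul : ∀ k : ℕ, skewMulCoeff θ f qf k = (X ^ m - 1 : Polynomial F).coeff k) :
    f.coeff 0 ≠ 0 := by
  have h0 := hmul 0
  rw [skewMulCoeff, Finset.sum_range_one, hc_lemma,
    if_neg (show ¬((0:ℕ) = m) by omega), if_pos rfl] at h0
  intro ha
  rw [ha, zero_mul] at h0
  simp at h0

lemma skew_key {F : Type*} [Field F] (θ : RingAut F) {f qf : Polynomial F} (m : ℕ)
    (hmul : ∀ k : ℕ, skewMulCoeff θ f qf k = (X ^ m - 1 : Polynomial F).coeff k) (k : ℕ) :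
    ∑ i ∈ Finset.range (k+1),
        f.coeff i * (θ^i) (skewMulCoeff θ qf f (k-i) - (X ^ m - 1 : Polynomial F).coeff (k-i))
      = if m ≤ k then (θ^m) (f.coeff (k-m)) - f.coeff (k-m) else 0 := by
  have e1 : ∑ i ∈ Finset.range (k+1),
        f.coeff i * (θ^i) (skewMulCoeff θ qf f (k-i) - (X ^ m - 1 : Polynomial F).coeff (k-i))
      = (∑ i ∈ Finset.range (k+1), f.coeff i * (θ^i) (skewMulCoeff θ qf f (k-i)))
        - ∑ i ∈ Finset.range (k+1), f.coeff i * (θ^i) ((X ^ m - 1 : Polynomial F).coeff (k-i)) := by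
    simp only [map_sub, mul_sub]
    rw [Finset.sum_sub_distrib]
  rw [e1, skew_assoc θ f qf f k]
  have e2 : ∑ p ∈ Finset.range (k+1), skewMulCoeff θ f qf p * (θ^p) (f.coeff (k-p))
      = (if m ≤ k then (θ^m) (f.coeff (k-m)) else 0) - f.coeff k := by
    calc ∑ p ∈ Finset.range (k+1), skewMulCoeff θ f qf p * (θ^p) (f.coeff (k-p))
        = ∑ p ∈ Finset.range (k+1),
            ((if p = m then (1:F) else 0) * (θ^p) (f.coeff (k-p))
              - (if p = 0 then (1:F) else 0) * (θ^p) (f.coeff (k-p))) := by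
          refine Finset.sum_congr rfl fun p _ => ?_
          rw [hmul p, hc_lemma, sub_mul]
      _ = (if m ≤ k then (θ^m) (f.coeff (k-m)) else 0)
            - (if 0 ≤ k then (θ^0) (f.coeff (k-0)) else 0) := by
          rw [Finset.sum_sub_distrib, spike1, spike1]
      _ = (if m ≤ k then (θ^m) (f.coeff (k-m)) else 0) - f.coeff k := by
          norm_num
  have e3 : ∑ i ∈ Finset.range (k+1), f.coeff i * (θ^i) ((X ^ m - 1 : Polynomial F).coeff (k-i))
      = (if m ≤ k then f.coeff (k-m) else 0) - f.coeff k := by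
    calc ∑ i ∈ Finset.range (k+1), f.coeff i * (θ^i) ((X ^ m - 1 : Polynomial F).coeff (k-i))
        = ∑ i ∈ Finset.range (k+1),
            (f.coeff i * (if k - i = m then (1:F) else 0)
              - f.coeff i * (if k - i = 0 then (1:F) else 0)) := by
          refine Finset.sum_congr rfl fun i _ => ?_
          rw [hc_lemma, map_sub, mul_sub]
          congr 1 <;> · rw [apply_ite (θ^i), map_one, map_zero]
      _ = (if m ≤ k then f.coeff (k-m) else 0) - (if 0 ≤ k then f.coeff (k-0) else 0) := by
          rw [Finset.sum_sub_distrib, spike2, spike2]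
      _ = (if m ≤ k then f.coeff (k-m) else 0) - f.coeff k := by simp
  rw [e2, e3]
  by_cases h : m ≤ k
  · simp only [if_pos h]; ring
  · simp only [if_neg h]; ring

theorem map_pow_eq_self_and_orderOf_dvd {F : Type*} [Field F] [Fintype F]
    (θ : RingAut F) (s : ℕ) (hs : orderOf θ = s)
    (f qf : Polynomial F) (hf : f.Monic) (hqf : qf.Monic) (m : ℕ)
    (hmul : ∀ k : ℕ, skewMulCoeff θ f qf k = (X ^ m - 1 : Polynomial F).coeff k) :
    f.map ((θ ^ m : RingAut F) : F →+* F) = f ∧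
      ((∀ t : ℕ, 0 < t → t < s →
          ∃ i < f.natDegree, (θ ^ t) (f.coeff i) ≠ f.coeff i) → s ∣ m) := by
  obtain ⟨hmeq, hm1⟩ := skew_deg_eq θ hf hqf m hmul (skew_top θ hf hqf)
  have ha0 : f.coeff 0 ≠ 0 := skew_const_ne θ m hm1 hmul
  set ρ : ℕ → F := fun k =>
    skewMulCoeff θ qf f k - (X ^ m - 1 : Polynomial F).coeff k with hρ
  have key : ∀ k, ∑ i ∈ Finset.range (k+1), f.coeff i * (θ^i) (ρ (k-i))
      = if m ≤ k then (θ^m) (f.coeff (k-m)) - f.coeff (k-m) else 0 :=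
    fun k => skew_key θ m hmul k
  have hρ0 : ∀ k, ρ k = 0 := by
    intro k
    induction k using Nat.strong_induction_on with
    | _ k ih =>
      rcases lt_trichotomy k m with hk | hk | hk
      · have h1 := key k
        rw [if_neg (by omega), Finset.sum_eq_single 0] at h1
        · rw [pow_zero] at h1
          have h2 : f.coeff 0 * ρ k = 0 := h1
          exact (mul_eq_zero.mp h2).resolve_left ha0
        · intro i hi hne
          simp only [Finset.mem_range, Nat.lt_succ_iff] at hi
          rw [ih (k - i) (by omega), map_zero, mul_zero]
        · intro h; exact absurd (Finset.mem_range.mpr (by omega)) h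
      · simp only [hρ]
        have ht : skewMulCoeff θ qf f m = 1 := by
          rw [hmeq, add_comm f.natDegree qf.natDegree]
          exact skew_top θ hqf hf
        rw [hk, ht, hc_lemma, if_pos rfl, if_neg (by omega)]
        ring
      · simp only [hρ]
        rw [skew_vanish θ qf f (by omega), hc_lemma, if_neg (by omega), if_neg (by omega)]
        ring
  have hfix : ∀ l, (θ^m) (f.coeff l) = f.coeff l := by
    intro l
    have h1 := key (l + m)
    rw [if_pos (by omega)] at h1
    have h2 : ∑ i ∈ Finset.range (l+m+1), f.coeff i * (θ^i) (ρ (l+m-i)) = 0 :=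
      Finset.sum_eq_zero fun i _ => by rw [hρ0, map_zero, mul_zero]
    rw [h2, Nat.add_sub_cancel] at h1
    exact sub_eq_zero.mp h1.symm
  constructor
  · ext l
    rw [coeff_map]
    exact hfix l
  · intro H
    have hfin : Finite (RingAut F) :=
      Finite.of_injective (fun e => (e : F → F))
        (fun a b hab => by ext x; exact congrFun hab x)
    have hspos : 0 < s := hs ▸ orderOf_pos θ
    rcases Nat.eq_zero_or_pos (m % s) with h0 | hpos
    · exact Nat.dvd_of_mod_eq_zero h0
    · exfalso
      obtain ⟨i, hi, hne⟩ := H (m % s) hpos (Nat.mod_lt _ hspos)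
      apply hne
      have hpow : θ ^ (m % s) = θ ^ m := by
        rw [← hs]; exact pow_mod_orderOf θ m
      rw [hpow]
      exact hfix i
end
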